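/- In the security first model (secure routes preferred above all other criteria), for every attacker m, destination d, and source AS s that under normal conditions (no attack) uses a secure route to d not passing through m, the AS s continues to use a secure route to d during m's attack. (Protocol downgrade attacks are impossible in the security first model.) -/
import Mathlib


open scoped Classical

namespace SBGP

/-- Business relationship of a neighbor, from the point of view of a given AS. -/
inductive Rel
  | customer
  | peer
  | provider
deriving DecidableEq

/-- The three positions at which the secure-route preference step can be inserted. -/
inductive SecModel
  | first
  | second
  | third
deriving DecidableEq

/-- An AS-level graph with business relationships on its edges. -/
structure ASGraph (V : Type*) where
  adj : V → V → Bool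
  /-- `rel u v` is the relationship of `v` as seen from `u`
      (`customer` means `v` is `u`'s customer, etc.). -/
  rel : V → V → Rel
  adj_symm : ∀ u v, adj u v = adj v u
  adj_irrefl : ∀ v, adj v v = false
  rel_consistent : ∀ u v, adj u v = true →
    ((rel u v = Rel.customer ↔ rel v u = Rel.provider) ∧
     (rel u v = Rel.peer ↔ rel v u = Rel.peer))

variable {V : Type*}

def lpRank : Rel → ℕ
  | Rel.customer => 0
  | Rel.peer => 1
  | Rel.provider => 2

/-- The relationship of the next hop of a route (`none` for trivial routes). -/
def nextRel (G : ASGraph V) : List V → Option Rel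
  | a :: b :: _ => some (G.rel a b)
  | _ => none

/-- Local-preference value of a route (customer < peer < provider). -/
def lpVal (G : ASGraph V) : List V → ℕ
  | a :: b :: _ => lpRank (G.rel a b)
  | _ => 0

/-- `R` is a (nonempty) path in `G`. -/
def IsPath (G : ASGraph V) : List V → Prop
  | [] => False
  | [_] => True
  | a :: b :: rest => G.adj a b = true ∧ IsPath G (b :: rest)

/-- `R` is a simple route in `G` ending at `d`. -/
def IsRouteTo (G : ASGraph V) (R : List V) (d : V) : Prop :=
  R.Nodup ∧ IsPath G R ∧ R.getLast? = some d

/-- The export rule (Ex) along a route `a :: b :: c :: …`: each internal AS `b`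
announces its route (with next hop `c`) to `a` only if that route is a customer
route of `b`, or `a` is `b`'s customer. -/
def ExportOK (G : ASGraph V) : List V → Prop
  | a :: b :: c :: rest =>
      (G.rel b c = Rel.customer ∨ G.rel b a = Rel.customer) ∧
      ExportOK G (b :: c :: rest)
  | _ => True

/-- A route is secure iff every AS on it has deployed S*BGP and it does not
contain the attacker (the bogus route is insecure even if the attacker is in `S`). -/
def SecureRoute (S : Finset V) (m : Option V) (R : List V) : Prop :=
  (∀ v ∈ R, v ∈ S) ∧ (∀ m', m = some m' → m' ∉ R)

/-- A legitimate route: ends at the destination `d` and avoids the attacker. -/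
def LegitRoute (m : Option V) (d : V) (R : List V) : Prop :=
  R.getLast? = some d ∧ ∀ m', m = some m' → m' ∉ R

/-- Perceivable routes at `s` for destination `d` when the (optional) attacker `m`
announces the bogus path "m,d": either a genuine export-compliant route to `d`
avoiding `m`, or an export-compliant route to `m` extended by `m`'s claimed
(possibly nonexistent) edge to `d`. -/
def Perceivable (G : ASGraph V) (m : Option V) (d : V) (s : V) (R : List V) : Prop :=
  R.head? = some s ∧
  ((IsRouteTo G R d ∧ ExportOK G R ∧ ∀ m', m = some m' → m' ∉ R) ∨
   (∃ m' R', m = some m' ∧ R = R' ++ [d] ∧ IsRouteTo G R' m' ∧ d ∉ R' ∧ ExportOK G R'))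

/-- The rank of a route (smaller is better), encoding lexicographically the
ranking steps of the given security model: LP (customer > peer > provider),
SP (shorter > longer) and SecP (secure > insecure), in the order determined by
the model.  All components are `< Fintype.card V + 2`, so the encoding is
faithful on simple routes. -/
noncomputable def rankNat [Fintype V] (G : ASGraph V) (S : Finset V) (m : Option V)
    (mdl : SecModel) (R : List V) : ℕ :=
  let B := Fintype.card V + 2
  let lp := lpVal G R
  let len := R.length
  let sec : ℕ := if SecureRoute S m R then 0 else 1
  match mdl with
  | SecModel.first => sec * B * B + lp * B + len
  | SecModel.second => lp * B * B + sec * B + len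
  | SecModel.third => lp * B * B + len * B + sec

/-- `n` exports the route `R` (its currently selected route) to neighbor `s`:
always if `R` is a customer route of `n` or `n` originates `R`; otherwise only
if `s` is `n`'s customer. -/
def exportsTo (G : ASGraph V) (n s : V) : List V → Prop
  | _ :: c :: _ => G.rel n c = Rel.customer ∨ G.rel n s = Rel.customer
  | _ => True

/-- Routes available to `s` given the current selections `σ` of all ASes:
routes exported by neighbors (with BGP loop detection), together with the
attacker's bogus announcement "m,d" to each of its neighbors. -/
def Avail (G : ASGraph V) (m : Option V) (d : V) (σ : V → List V) (s : V)
    (R : List V) : Prop :=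
  (∃ n, G.adj s n = true ∧ (∀ m', m = some m' → n ≠ m') ∧ σ n ≠ [] ∧
      (σ n).head? = some n ∧ s ∉ σ n ∧ exportsTo G n s (σ n) ∧ R = s :: σ n) ∨
  (∃ m', m = some m' ∧ G.adj s m' = true ∧ s ≠ d ∧ R = [s, m', d])

/-- A stable routing state for destination `d`, secure deployment `S`,
attacker `m`, security model `mdl` and tiebreak `tb`: every AS (other than the
destination and the attacker) selects the best available route, where ties in
rank are broken by the strict tiebreak `tb`. -/
def Stable [Fintype V] (G : ASGraph V) (tb : V → List V → ℕ) (S : Finset V)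
    (m : Option V) (d : V) (mdl : SecModel) (σ : V → List V) : Prop :=
  σ d = [d] ∧
  (∀ m', m = some m' → σ m' = []) ∧
  ∀ s, s ≠ d → (∀ m', m = some m' → s ≠ m') →
    ((σ s = [] ∧ ∀ R, ¬ Avail G m d σ s R) ∨
     (Avail G m d σ s (σ s) ∧
      ∀ R, Avail G m d σ s R → R ≠ σ s →
        rankNat G S m mdl (σ s) < rankNat G S m mdl R ∨
        (rankNat G S m mdl (σ s) = rankNat G S m mdl R ∧ tb s (σ s) < tb s R)))

/-- `s` is happy: it selects a legitimate route to `d`, avoiding the attacker. -/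
def Happy (m : Option V) (d : V) (σ : V → List V) (s : V) : Prop :=
  σ s ≠ [] ∧ (σ s).getLast? = some d ∧ ∀ m', m = some m' → m' ∉ σ s

/-- The set of most-preferred perceivable routes of `s` (before the tiebreak step). -/
def BPR [Fintype V] (G : ASGraph V) (S : Finset V) (m : Option V) (d : V)
    (mdl : SecModel) (s : V) (R : List V) : Prop :=
  Perceivable G m d s R ∧
  ∀ R', Perceivable G m d s R' → rankNat G S m mdl R ≤ rankNat G S m mdl R'

/-- The number of happy source ASes (sources other than `m` and `d`). -/
noncomputable def happyCount [Fintype V] [DecidableEq V] (m d : V)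
    (σ : V → List V) : ℕ :=
  (Finset.univ.filter fun s => s ≠ m ∧ s ≠ d ∧ Happy (some m) d σ s).card

/-- The customer-provider hierarchy is acyclic. -/
def Hierarchy (G : ASGraph V) : Prop :=
  ∃ h : V → ℕ, ∀ u v, G.adj u v = true → G.rel u v = Rel.customer → h v < h u

/-- The tiebreak of every AS is deterministic (injective on routes). -/
def InjTB (tb : V → List V → ℕ) : Prop :=
  ∀ s, Function.Injective (tb s)

end SBGP
namespace SBGP


section Aux

variable {V : Type*} [Fintype V] [DecidableEq V]
variable {G : ASGraph V} {tb : V → List V → ℕ} {S : Finset V} {d : V}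

lemma lpRank_le_two (r : Rel) : lpRank r ≤ 2 := by cases r <;> simp [lpRank]

lemma lpVal_le_two (G : ASGraph V) : ∀ R : List V, lpVal G R ≤ 2
  | [] => by simp [lpVal]
  | [_] => by simp [lpVal]
  | _ :: _ :: _ => lpRank_le_two _

lemma customer_of_lpRank_eq_zero : ∀ {r : Rel}, lpRank r = 0 → r = Rel.customer := by
  intro r h; cases r <;> simp_all [lpRank]

lemma mem_of_getLast?' {α : Type*} {l : List α} {a : α} (h : l.getLast? = some a) :
    a ∈ l := by
  obtain ⟨hne, h2⟩ := List.mem_getLast?_eq_getLast (Option.mem_def.mpr h)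
  rw [h2]; exact List.getLast_mem hne

lemma head?_shape {α : Type*} {l : List α} {a : α} (h : l.head? = some a) :
    ∃ t, l = a :: t := by
  cases l with
  | nil => simp at h
  | cons b t =>
    have hb : b = a := by simpa using h
    exact ⟨t, by rw [hb]⟩

lemma rank_secure' {mo : Option V} {R : List V} (h : SecureRoute S mo R) :
    rankNat G S mo SecModel.first R = lpVal G R * (Fintype.card V + 2) + R.length := by
  simp [rankNat, h]

lemma secure_of_rank_lt {mo : Option V} {R : List V}
    (h : rankNat G S mo SecModel.first R
        < (Fintype.card V + 2) * (Fintype.card V + 2)) :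
    SecureRoute S mo R := by
  by_contra hc
  have h2 : (Fintype.card V + 2) * (Fintype.card V + 2)
      ≤ rankNat G S mo SecModel.first R := by
    simp only [rankNat, hc, if_false, one_mul]
    linarith [Nat.zero_le (lpVal G R * (Fintype.card V + 2)), Nat.zero_le R.length]
  exact absurd h (not_lt.mpr h2)

lemma secure_lp_of_rank_lt {mo : Option V} {R : List V}
    (h : rankNat G S mo SecModel.first R < Fintype.card V + 2) :
    SecureRoute S mo R ∧ lpVal G R = 0 := by
  have hb : Fintype.card V + 2 ≤ (Fintype.card V + 2) * (Fintype.card V + 2) :=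
    Nat.le_mul_of_pos_left _ (by omega)
  have hs := secure_of_rank_lt (G := G) (lt_of_lt_of_le h hb)
  refine ⟨hs, ?_⟩
  rw [rank_secure' hs] at h
  by_contra hlp
  have : Fintype.card V + 2 ≤ lpVal G R * (Fintype.card V + 2) :=
    Nat.le_mul_of_pos_left _ (Nat.pos_of_ne_zero hlp)
  omega

lemma rank_secure_lt_sq {mo : Option V} {R : List V} (h : SecureRoute S mo R)
    (hcard : 1 ≤ Fintype.card V) (hlen : R.length ≤ Fintype.card V + 1) :
    rankNat G S mo SecModel.first R
      < (Fintype.card V + 2) * (Fintype.card V + 2) := by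
  rw [rank_secure' h]
  have h2 : lpVal G R * (Fintype.card V + 2) ≤ 2 * (Fintype.card V + 2) :=
    Nat.mul_le_mul_right _ (lpVal_le_two G R)
  nlinarith [h2, hlen, hcard]

lemma exportsTo_of_lp_zero {n v : V} {R : List V} (h : lpVal G R = 0)
    (hh : R.head? = some n) : exportsTo G n v R := by
  obtain ⟨t, rfl⟩ := head?_shape hh
  cases t with
  | nil => trivial
  | cons c t' =>
    exact Or.inl (customer_of_lpRank_eq_zero (by simpa [lpVal] using h))

lemma stable_struct {mo : Option V} {σ : V → List V}
    (hst : Stable G tb S mo d SecModel.first σ) :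
    ∀ k v, (σ v).length ≤ k → σ v ≠ [] → (∀ m', mo = some m' → m' ∉ σ v) →
      (σ v).head? = some v ∧ (σ v).getLast? = some d ∧ (σ v).Nodup ∧
      ((v = d ∧ σ v = [d]) ∨
        ∃ n, G.adj v n = true ∧ v ∉ σ n ∧ σ n ≠ [] ∧ (σ n).head? = some n ∧
          (∀ m', mo = some m' → m' ∉ σ n) ∧ exportsTo G n v (σ n) ∧ σ v = v :: σ n) := by
  intro k
  induction k with
  | zero =>
    intro v hl hne _
    exact absurd (List.length_eq_zero_iff.mp (Nat.le_zero.mp hl)) hne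
  | succ k ih =>
    intro v hl hne hmf
    by_cases hvd : v = d
    · subst hvd
      rw [hst.1]
      exact ⟨rfl, rfl, List.nodup_singleton _, Or.inl ⟨rfl, rfl⟩⟩
    · have hvm : ∀ m', mo = some m' → v ≠ m' := by
        intro m' hm' hv
        exact hne (by rw [hv, hst.2.1 m' hm'])
      rcases hst.2.2 v hvd hvm with ⟨h0, _⟩ | ⟨hav, _⟩
      · exact absurd h0 hne
      · rcases hav with ⟨n, hadj, hnm, hnne, hhead, hvn, hexp, heq⟩ | ⟨m', hm', _, _, heq⟩
        · have hmfn : ∀ m', mo = some m' → m' ∉ σ n := by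
            intro m' hm' hmem
            exact hmf m' hm' (by rw [heq]; exact List.mem_cons_of_mem _ hmem)
          have hlen : (σ n).length ≤ k := by
            rw [heq, List.length_cons] at hl; omega
          obtain ⟨_, hlast, hnd, _⟩ := ih n hlen hnne hmfn
          refine ⟨by rw [heq]; rfl, ?_, ?_,
            Or.inr ⟨n, hadj, hvn, hnne, hhead, hmfn, hexp, heq⟩⟩
          · rw [heq]
            cases hc : σ n with
            | nil => exact absurd hc hnne
            | cons a t =>
              rw [hc] at hlast
              rw [List.getLast?_cons_cons]
              exact hlast
          · rw [heq]; exact List.nodup_cons.mpr ⟨hvn, hnd⟩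
        · exfalso
          refine hmf m' hm' ?_
          rw [heq]; simp

lemma stable_happy {mo : Option V} {σ : V → List V}
    (hst : Stable G tb S mo d SecModel.first σ) {v : V} (hne : σ v ≠ [])
    (hmf : ∀ m', mo = some m' → m' ∉ σ v) : Happy mo d σ v :=
  ⟨hne, (stable_struct hst _ v le_rfl hne hmf).2.1, hmf⟩

lemma chain_rank {mo : Option V} {v n : V} {σ : V → List V}
    (hadj : G.adj v n = true) (hexp : exportsTo G n v (σ n))
    (hh : (σ n).head? = some n) (hnne : σ n ≠ [])
    (hsec : SecureRoute S mo (v :: σ n)) :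
    SecureRoute S mo (σ n) ∧
      rankNat G S mo SecModel.first (σ n)
        < rankNat G S mo SecModel.first (v :: σ n) := by
  have hsecn : SecureRoute S mo (σ n) :=
    ⟨fun x hx => hsec.1 x (List.mem_cons_of_mem _ hx),
     fun m' hm' hx => hsec.2 m' hm' (List.mem_cons_of_mem _ hx)⟩
  refine ⟨hsecn, ?_⟩
  rw [rank_secure' hsecn, rank_secure' hsec]
  obtain ⟨t, ht⟩ := head?_shape hh
  rw [ht] at hexp
  rw [ht]
  have hlpv : lpVal G (v :: n :: t) = lpRank (G.rel v n) := rfl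
  cases t with
  | nil =>
    simp only [lpVal, List.length]
    linarith [Nat.zero_le (lpRank (G.rel v n) * (Fintype.card V + 2))]
  | cons c t' =>
    have hexp' : G.rel n c = Rel.customer ∨ G.rel n v = Rel.customer := hexp
    rcases hexp' with hc | hc
    · have h0 : lpVal G (n :: c :: t') = 0 := by simp [lpVal, hc, lpRank]
      rw [h0]
      simp only [List.length_cons, Nat.zero_mul, Nat.zero_add]
      have := Nat.zero_le (lpVal G (v :: n :: c :: t') * (Fintype.card V + 2))
      linarith
    · have hadj' : G.adj n v = true := by rw [G.adj_symm]; exact hadj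
      have hpv : G.rel v n = Rel.provider := (G.rel_consistent n v hadj').1.mp hc
      rw [hlpv, hpv]
      have h2 : lpVal G (n :: c :: t') * (Fintype.card V + 2)
          ≤ 2 * (Fintype.card V + 2) :=
        Nat.mul_le_mul_right _ (lpVal_le_two G _)
      simp only [lpRank, List.length_cons]
      linarith

lemma mem_secure {mo : Option V} {σ : V → List V}
    (hst : Stable G tb S mo d SecModel.first σ) :
    ∀ k v, (σ v).length ≤ k → σ v ≠ [] → (∀ m', mo = some m' → m' ∉ σ v) →
      SecureRoute S mo (σ v) → ∀ w ∈ σ v, σ w ≠ [] ∧ SecureRoute S mo (σ w) ∧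
        rankNat G S mo SecModel.first (σ w) ≤ rankNat G S mo SecModel.first (σ v) := by
  intro k
  induction k with
  | zero =>
    intro v hl hne _ _
    exact absurd (List.length_eq_zero_iff.mp (Nat.le_zero.mp hl)) hne
  | succ k ih =>
    intro v hl hne hmf hsec w hw
    by_cases hwv : w = v
    · subst hwv; exact ⟨hne, hsec, le_rfl⟩
    · obtain ⟨_, _, _, hstruct⟩ := stable_struct hst (k+1) v hl hne hmf
      rcases hstruct with ⟨hvd, heqd⟩ | ⟨n, hadj, hvn, hnne, hh, hmfn, hexp, heq⟩
      · exfalso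
        apply hwv
        rw [heqd] at hw
        simp at hw
        rw [hw, hvd]
      · rw [heq] at hw
        rcases List.mem_cons.mp hw with h | h
        · exact absurd h hwv
        · have hsecv : SecureRoute S mo (v :: σ n) := heq ▸ hsec
          obtain ⟨hsecn, hlt⟩ := chain_rank hadj hexp hh hnne hsecv
          have hlenn : (σ n).length ≤ k := by rw [heq, List.length_cons] at hl; omega
          obtain ⟨h1, h2, h3⟩ := ih n hlenn hnne hmfn hsecn w h
          refine ⟨h1, h2, le_trans h3 ?_⟩
          rw [heq]
          exact hlt.le

lemma avail_ne_nil {mo : Option V} {σ : V → List V} {v : V} {R : List V}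
    (h : Avail G mo d σ v R) : R ≠ [] := by
  rcases h with ⟨n, _, _, _, _, _, _, heq⟩ | ⟨m', _, _, _, heq⟩ <;> simp [heq]

lemma select_le {mo : Option V} {σ : V → List V}
    (hst : Stable G tb S mo d SecModel.first σ) {v : V} (hvd : v ≠ d)
    (hvm : ∀ m', mo = some m' → v ≠ m') {R : List V} (hR : Avail G mo d σ v R) :
    σ v ≠ [] ∧
      rankNat G S mo SecModel.first (σ v) ≤ rankNat G S mo SecModel.first R := by
  rcases hst.2.2 v hvd hvm with ⟨_, hno⟩ | ⟨hA, hmin⟩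
  · exact absurd hR (hno R)
  · refine ⟨avail_ne_nil hA, ?_⟩
    by_cases hRv : R = σ v
    · rw [hRv]
    · rcases hmin R hR hRv with h | ⟨h, _⟩
      · exact h.le
      · exact h.le

/-- Key sub-induction: a node whose normal route is a secure, attacker-free
customer route keeps a secure customer route under attack. -/
lemma downgrade_aux0 {m : V} {σN σA : V → List V}
    (hN : Stable G tb S none d SecModel.first σN)
    (hA : Stable G tb S (some m) d SecModel.first σA)
    (hmd : m ≠ d) :
    ∀ k v, (σN v).length ≤ k → σN v ≠ [] → m ∉ σN v → (∀ x ∈ σN v, x ∈ S) →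
      lpVal G (σN v) = 0 →
      SecureRoute S (some m) (σA v) ∧ Happy (some m) d σA v ∧ lpVal G (σA v) = 0 := by
  intro k
  induction k with
  | zero =>
    intro v hl hne _ _ _
    exact absurd (List.length_eq_zero_iff.mp (Nat.le_zero.mp hl)) hne
  | succ k ih =>
    intro v hl hne hm hsub hlp
    obtain ⟨hhead, hlast, hnd, hstruct⟩ :=
      stable_struct hN (k+1) v hl hne (fun m' h => nomatch h)
    rcases hstruct with ⟨hvd, heqd⟩ | ⟨n, hadj, hvn, hnne, hh, _, hexp, heq⟩
    · subst hvd
      have hAd : σA v = [v] := hA.1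
      have hdS : v ∈ S := hsub v (by rw [heqd]; simp)
      have hsecd : SecureRoute S (some m) (σA v) := by
        rw [hAd]
        refine ⟨?_, ?_⟩
        · intro x hx; simp at hx; rw [hx]; exact hdS
        · intro m' hm'; cases hm'; simp; exact hmd
      refine ⟨hsecd, ⟨?_, ?_, ?_⟩, ?_⟩
      · rw [hAd]; simp
      · rw [hAd]; rfl
      · intro m' hm'; cases hm'; rw [hAd]; simp; exact hmd
      · rw [hAd]; rfl
    · have hvd : v ≠ d := by
        intro h; subst h
        rw [hN.1] at heq
        injection heq with _ h2
        exact hnne h2.symm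
      obtain ⟨t, htn⟩ := head?_shape hh
      have hvS : v ∈ S := hsub v (by rw [heq]; simp)
      have hvm : v ≠ m := by
        intro h
        exact hm (by rw [heq, ← h]; simp)
      have hnmem : n ∈ σN v := by rw [heq, htn]; simp
      have hnm : n ≠ m := fun h => hm (h ▸ hnmem)
      have hcust : G.rel v n = Rel.customer := by
        apply customer_of_lpRank_eq_zero
        rw [heq, htn] at hlp
        exact hlp
      have hlpn : lpVal G (σN n) = 0 := by
        rw [htn]
        cases t with
        | nil => rfl
        | cons c t' =>
          rw [htn] at hexp
          have hexp' : G.rel n c = Rel.customer ∨ G.rel n v = Rel.customer := hexp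
          rcases hexp' with hc | hc
          · simp [lpVal, hc, lpRank]
          · exfalso
            have hadj' : G.adj n v = true := by rw [G.adj_symm]; exact hadj
            have hpv : G.rel v n = Rel.provider := (G.rel_consistent n v hadj').1.mp hc
            rw [hcust] at hpv
            exact Rel.noConfusion hpv
      have hmn : m ∉ σN n := fun h => hm (by rw [heq]; exact List.mem_cons_of_mem _ h)
      have hsubn : ∀ x ∈ σN n, x ∈ S :=
        fun x hx => hsub x (by rw [heq]; exact List.mem_cons_of_mem _ hx)
      have hlenn : (σN n).length ≤ k := by rw [heq, List.length_cons] at hl; omega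
      obtain ⟨hsecAn, hhapAn, hlpAn⟩ := ih n hlenn hnne hmn hsubn hlpn
      have hAnne : σA n ≠ [] := hhapAn.1
      have hmfAn : ∀ m', some m = some m' → m' ∉ σA n := by
        intro m' hm'; cases hm'; exact hsecAn.2 m rfl
      obtain ⟨hAh, hAlast, hAnd, _⟩ := stable_struct hA _ n le_rfl hAnne hmfAn
      have hAlen : (σA n).length ≤ Fintype.card V := hAnd.length_le_card
      have hexpA : exportsTo G n v (σA n) := exportsTo_of_lp_zero hlpAn hAh
      by_cases hloop : v ∈ σA n
      · obtain ⟨hWne, hWsec, hWrank⟩ :=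
          mem_secure hA _ n le_rfl hAnne hmfAn hsecAn v hloop
        have hrAn : rankNat G S (some m) SecModel.first (σA n) = (σA n).length := by
          rw [rank_secure' hsecAn, hlpAn]; simp
        have hWlt : rankNat G S (some m) SecModel.first (σA v)
            < Fintype.card V + 2 := by
          rw [hrAn] at hWrank; omega
        obtain ⟨hsecv, hlpv⟩ := secure_lp_of_rank_lt hWlt
        have hmfv : ∀ m', some m = some m' → m' ∉ σA v := by
          intro m' hm'; cases hm'; exact hsecv.2 m rfl
        exact ⟨hsecv, stable_happy hA hWne hmfv, hlpv⟩
      · have hAvail : Avail G (some m) d σA v (v :: σA n) :=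
          Or.inl ⟨n, hadj, (by intro m' hm'; cases hm'; exact hnm), hAnne, hAh,
            hloop, hexpA, rfl⟩
        have hvm' : ∀ m', (some m : Option V) = some m' → v ≠ m' := by
          intro m' hm'; cases hm'; exact hvm
        obtain ⟨hvne, hsel⟩ := select_le hA hvd hvm' hAvail
        have hsecR : SecureRoute S (some m) (v :: σA n) := by
          refine ⟨?_, ?_⟩
          · intro x hx
            rcases List.mem_cons.mp hx with h | h
            · rw [h]; exact hvS
            · exact hsecAn.1 x h
          · intro m' hm'; cases hm'
            intro hmem
            rcases List.mem_cons.mp hmem with h | h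
            · exact hvm h.symm
            · exact hsecAn.2 m rfl h
        obtain ⟨t2, ht2⟩ := head?_shape hAh
        have hlpR : lpVal G (v :: σA n) = 0 := by
          rw [ht2]
          simp [lpVal, hcust, lpRank]
        have hrR : rankNat G S (some m) SecModel.first (v :: σA n)
            < Fintype.card V + 2 := by
          rw [rank_secure' hsecR, hlpR, List.length_cons]
          simp only [Nat.zero_mul, Nat.zero_add]
          omega
        have hsv : rankNat G S (some m) SecModel.first (σA v)
            < Fintype.card V + 2 := lt_of_le_of_lt hsel hrR
        obtain ⟨hsecv, hlpv⟩ := secure_lp_of_rank_lt hsv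
        have hmfv : ∀ m', some m = some m' → m' ∉ σA v := by
          intro m' hm'; cases hm'; exact hsecv.2 m rfl
        exact ⟨hsecv, stable_happy hA hvne hmfv, hlpv⟩

/-- Main induction: a node whose normal route is a secure, attacker-free route
keeps a secure route under attack. -/
lemma downgrade_aux {m : V} {σN σA : V → List V}
    (hN : Stable G tb S none d SecModel.first σN)
    (hA : Stable G tb S (some m) d SecModel.first σA)
    (hmd : m ≠ d) :
    ∀ k v, (σN v).length ≤ k → σN v ≠ [] → m ∉ σN v → (∀ x ∈ σN v, x ∈ S) →
      SecureRoute S (some m) (σA v) ∧ Happy (some m) d σA v := by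
  have hcard : 1 ≤ Fintype.card V := Fintype.card_pos_iff.mpr ⟨d⟩
  intro k
  induction k with
  | zero =>
    intro v hl hne _ _
    exact absurd (List.length_eq_zero_iff.mp (Nat.le_zero.mp hl)) hne
  | succ k ih =>
    intro v hl hne hm hsub
    obtain ⟨hhead, hlast, hnd, hstruct⟩ :=
      stable_struct hN (k+1) v hl hne (fun m' h => nomatch h)
    rcases hstruct with ⟨hvd, heqd⟩ | ⟨n, hadj, hvn, hnne, hh, _, hexp, heq⟩
    · subst hvd
      have hAd : σA v = [v] := hA.1
      have hdS : v ∈ S := hsub v (by rw [heqd]; simp)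
      have hsecd : SecureRoute S (some m) (σA v) := by
        rw [hAd]
        refine ⟨?_, ?_⟩
        · intro x hx; simp at hx; rw [hx]; exact hdS
        · intro m' hm'; cases hm'; simp; exact hmd
      refine ⟨hsecd, ?_, ?_, ?_⟩
      · rw [hAd]; simp
      · rw [hAd]; rfl
      · intro m' hm'; cases hm'; rw [hAd]; simp; exact hmd
    · have hvd : v ≠ d := by
        intro h; subst h
        rw [hN.1] at heq
        injection heq with _ h2
        exact hnne h2.symm
      obtain ⟨t, htn⟩ := head?_shape hh
      have hvS : v ∈ S := hsub v (by rw [heq]; simp)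
      have hvm : v ≠ m := by
        intro h
        exact hm (by rw [heq, ← h]; simp)
      have hnmem : n ∈ σN v := by rw [heq, htn]; simp
      have hnm : n ≠ m := fun h => hm (h ▸ hnmem)
      have hmn : m ∉ σN n := fun h => hm (by rw [heq]; exact List.mem_cons_of_mem _ h)
      have hsubn : ∀ x ∈ σN n, x ∈ S :=
        fun x hx => hsub x (by rw [heq]; exact List.mem_cons_of_mem _ hx)
      have hlenn : (σN n).length ≤ k := by rw [heq, List.length_cons] at hl; omega
      -- establish the attack-state route of the next hop and its exportability
      have hkey : SecureRoute S (some m) (σA n) ∧ Happy (some m) d σA n ∧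
          exportsTo G n v (σA n) := by
        have viaAux0 : lpVal G (σN n) = 0 →
            SecureRoute S (some m) (σA n) ∧ Happy (some m) d σA n ∧
              exportsTo G n v (σA n) := by
          intro hlpn
          obtain ⟨h1, h2, h3⟩ :=
            downgrade_aux0 hN hA hmd ((σN n).length) n le_rfl hnne hmn hsubn hlpn
          have hmfAn : ∀ m', some m = some m' → m' ∉ σA n := by
            intro m' hm'; cases hm'; exact h1.2 m rfl
          obtain ⟨hAh, _, _, _⟩ := stable_struct hA _ n le_rfl h2.1 hmfAn
          exact ⟨h1, h2, exportsTo_of_lp_zero h3 hAh⟩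
        cases t with
        | nil => exact viaAux0 (by rw [htn]; rfl)
        | cons c t' =>
          rw [htn] at hexp
          have hexp' : G.rel n c = Rel.customer ∨ G.rel n v = Rel.customer := hexp
          rcases hexp' with hc | hc
          · exact viaAux0 (by rw [htn]; simp [lpVal, hc, lpRank])
          · obtain ⟨h1, h2⟩ := ih n hlenn hnne hmn hsubn
            refine ⟨h1, h2, ?_⟩
            cases hAn : σA n with
            | nil => trivial
            | cons a t2 =>
              cases t2 with
              | nil => trivial
              | cons b t3 => exact Or.inr hc
      obtain ⟨hsecAn, hhapAn, hexpA⟩ := hkey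
      have hAnne : σA n ≠ [] := hhapAn.1
      have hmfAn : ∀ m', some m = some m' → m' ∉ σA n := by
        intro m' hm'; cases hm'; exact hsecAn.2 m rfl
      obtain ⟨hAh, hAlast, hAnd, _⟩ := stable_struct hA _ n le_rfl hAnne hmfAn
      have hAlen : (σA n).length ≤ Fintype.card V := hAnd.length_le_card
      by_cases hloop : v ∈ σA n
      · obtain ⟨hWne, hWsec, hWrank⟩ :=
          mem_secure hA _ n le_rfl hAnne hmfAn hsecAn v hloop
        have hWlt : rankNat G S (some m) SecModel.first (σA v)
            < (Fintype.card V + 2) * (Fintype.card V + 2) :=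
          lt_of_le_of_lt hWrank (rank_secure_lt_sq hsecAn hcard (by omega))
        have hsecv := secure_of_rank_lt hWlt
        have hmfv : ∀ m', some m = some m' → m' ∉ σA v := by
          intro m' hm'; cases hm'; exact hsecv.2 m rfl
        exact ⟨hsecv, stable_happy hA hWne hmfv⟩
      · have hAvail : Avail G (some m) d σA v (v :: σA n) :=
          Or.inl ⟨n, hadj, (by intro m' hm'; cases hm'; exact hnm), hAnne, hAh,
            hloop, hexpA, rfl⟩
        have hvm' : ∀ m', (some m : Option V) = some m' → v ≠ m' := by
          intro m' hm'; cases hm'; exact hvm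
        obtain ⟨hvne, hsel⟩ := select_le hA hvd hvm' hAvail
        have hsecR : SecureRoute S (some m) (v :: σA n) := by
          refine ⟨?_, ?_⟩
          · intro x hx
            rcases List.mem_cons.mp hx with h | h
            · rw [h]; exact hvS
            · exact hsecAn.1 x h
          · intro m' hm'; cases hm'
            intro hmem
            rcases List.mem_cons.mp hmem with h | h
            · exact hvm h.symm
            · exact hsecAn.2 m rfl h
        have hrR : rankNat G S (some m) SecModel.first (v :: σA n)
            < (Fintype.card V + 2) * (Fintype.card V + 2) :=
          rank_secure_lt_sq hsecR hcard (by rw [List.length_cons]; omega)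
        have hsv := lt_of_le_of_lt hsel hrR
        have hsecv := secure_of_rank_lt hsv
        have hmfv : ∀ m', some m = some m' → m' ∉ σA v := by
          intro m' hm'; cases hm'; exact hsecv.2 m rfl
        exact ⟨hsecv, stable_happy hA hvne hmfv⟩

end Aux

/-- **No protocol downgrade attacks in the security first model.**
For every attacker `m`, destination `d` and source `s` that, under normal
conditions (no attack), uses a secure route to `d` not passing through `m`,
the source `s` continues to use a secure route to `d` during `m`'s attack. -/
theorem no_downgrade_first {V : Type*} [Fintype V] [DecidableEq V]
    (G : ASGraph V) (tb : V → List V → ℕ) (hinj : InjTB tb)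
    (m d : V) (S : Finset V)
    (σN σA : V → List V)
    (hN : Stable G tb S none d SecModel.first σN)
    (hA : Stable G tb S (some m) d SecModel.first σA)
    (s : V)
    (hnormal : Happy none d σN s)
    (hsec : SecureRoute S none (σN s))
    (havoid : m ∉ σN s) :
    SecureRoute S (some m) (σA s) ∧ Happy (some m) d σA s := by
  have hne : σN s ≠ [] := hnormal.1
  have hdmem : d ∈ σN s := mem_of_getLast?' hnormal.2.1
  have hmd : m ≠ d := fun h => havoid (h ▸ hdmem)
  exact downgrade_aux hN hA hmd ((σN s).length) s le_rfl hne havoid hsec.1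

end SBGP
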